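/- Fix an integer S ≥ 1. Let a : ℕ → ℝ with a_i ≥ 0 and Σ_{i=0}^{∞} a_i = 1, extended by a_k = 0 for k < 0, and let q : ℕ → ℝ with q_i ≥ 0 and Σ_{i=0}^{∞} q_i = 1 satisfy the balance equations q_j = a_j·(Σ_{i=0}^{S} q_i) + Σ_{i=S+1}^{∞} q_i·a_{j−i+S} for all j ∈ ℕ. Define A(z) = Σ_{i=0}^{∞} a_i z^i, Q(z) = Σ_{i=0}^{∞} q_i z^i, and N(z) = Σ_{i=0}^{S−1} q_i Σ_{l=i}^{S−1} z^l. Then for every z ∈ ℂ with |z| < 1, (z^S − A(z))·Q(z) = (z − 1)·N(z)·A(z). -/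

import Mathlib

/-- Extension of a sequence on ℕ to ℤ by zero on negative integers. -/
def aext (a : ℕ → ℝ) : ℤ → ℝ := fun k => if 0 ≤ k then a k.toNat else 0

/-- Shifting the index of a tsum when the first `m` terms vanish. -/
lemma tsum_shift_aux {G : Type*} [AddCommGroup G] [TopologicalSpace G] [IsTopologicalAddGroup G]
    [T2Space G] {f : ℕ → G} (m : ℕ) (hf : Summable f) (h0 : ∀ j < m, f j = 0) :
    ∑' j, f j = ∑' k, f (k + m) := by
  rw [← Summable.sum_add_tsum_nat_add m hf,
    Finset.sum_eq_zero (fun j hj => h0 j (Finset.mem_range.1 hj)), zero_add]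

/-- The core double family appearing in the balance equations, times `z^j`. -/
def gfun (S : ℕ) (a q : ℕ → ℝ) (z : ℂ) (i j : ℕ) : ℂ :=
  ((if S + 1 ≤ i then q i * aext a ((j : ℤ) - (i : ℤ) + (S : ℤ)) else 0 : ℝ) : ℂ) * z ^ j

/-- The real nonnegative majorant of `gfun`. -/
def Ffun (S : ℕ) (a q : ℕ → ℝ) (p : ℕ × ℕ) : ℝ :=
  if S + 1 ≤ p.1 then q p.1 * aext a ((p.2 : ℤ) - (p.1 : ℤ) + (S : ℤ)) else 0

lemma aext_nonneg {a : ℕ → ℝ} (ha : ∀ i, 0 ≤ a i) (k : ℤ) : 0 ≤ aext a k := by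
  unfold aext; split <;> simp [ha]

lemma aext_eq {a : ℕ → ℝ} (m j : ℕ) :
    aext a ((j : ℤ) - (m : ℤ)) = if m ≤ j then a (j - m) else 0 := by
  unfold aext
  by_cases h : m ≤ j
  · rw [if_pos (by omega : (0 : ℤ) ≤ (j : ℤ) - (m : ℤ)), if_pos h]
    congr 1; omega
  · rw [if_neg (by omega), if_neg h]

lemma arg_eq (S i j : ℕ) (hi : S + 1 ≤ i) :
    (j : ℤ) - (i : ℤ) + (S : ℤ) = (j : ℤ) - ((i - S : ℕ) : ℤ) := by omega

/-- If q is a stationary distribution of the queue recursion, then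
for |z| < 1, (z^S − A(z)) Q(z) = (z − 1) N(z) A(z). -/
theorem queue_functional_equation
    (S : ℕ) (hS : 1 ≤ S)
    (a : ℕ → ℝ) (ha_nonneg : ∀ i, 0 ≤ a i) (ha_sum : HasSum a 1)
    (q : ℕ → ℝ) (hq_nonneg : ∀ i, 0 ≤ q i) (hq_sum : HasSum q 1)
    (h_balance : ∀ j : ℕ,
      q j = a j * (∑ i ∈ Finset.range (S + 1), q i) +
        ∑' i : ℕ, if S + 1 ≤ i then q i * aext a ((j : ℤ) - (i : ℤ) + (S : ℤ)) else 0) :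
    ∀ z : ℂ, ‖z‖ < 1 →
      (z ^ S - ∑' i : ℕ, (a i : ℂ) * z ^ i) * (∑' i : ℕ, (q i : ℂ) * z ^ i) =
        (z - 1) * (∑ i ∈ Finset.range S, (q i : ℂ) * ∑ l ∈ Finset.Ico i S, z ^ l) *
          (∑' i : ℕ, (a i : ℂ) * z ^ i) := by
  intro z hz
  classical
  have hz1 : ‖z‖ ≤ 1 := hz.le
  have ha_sm : Summable a := ha_sum.summable
  have hq_sm : Summable q := hq_sum.summable
  -- summability of the power series
  have key : ∀ c : ℕ → ℝ, (∀ i, 0 ≤ c i) → Summable c →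
      Summable (fun i => (c i : ℂ) * z ^ i) := by
    intro c hc hcs
    refine Summable.of_norm (hcs.of_nonneg_of_le (fun i => norm_nonneg _) ?_)
    intro i
    rw [norm_mul, norm_pow, Complex.norm_real, Real.norm_of_nonneg (hc i)]
    calc c i * ‖z‖ ^ i ≤ c i * 1 :=
          mul_le_mul_of_nonneg_left (pow_le_one₀ (norm_nonneg z) hz1) (hc i)
      _ = c i := mul_one _
  have hA_sm : Summable (fun i => (a i : ℂ) * z ^ i) := key a ha_nonneg ha_sm
  have hQ_sm : Summable (fun i => (q i : ℂ) * z ^ i) := key q hq_nonneg hq_sm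
  set A : ℂ := ∑' i : ℕ, (a i : ℂ) * z ^ i with hA
  set Qz : ℂ := ∑' i : ℕ, (q i : ℂ) * z ^ i with hQ
  set C : ℝ := ∑ i ∈ Finset.range (S + 1), q i with hC
  -- summability of shifted sequences
  have hshift_sm : ∀ m : ℕ, Summable (fun j => if m ≤ j then a (j - m) else 0) := by
    intro m
    refine (summable_nat_add_iff m).mp ?_
    have : (fun n => if m ≤ n + m then a (n + m - m) else 0) = a := by
      funext n; rw [if_pos (Nat.le_add_left m n)]; congr 1; omega
    rw [this]; exact ha_sm
  have hshift_tsum : ∀ m : ℕ, (∑' j, if m ≤ j then a (j - m) else 0) = 1 := by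
    intro m
    rw [tsum_shift_aux m (hshift_sm m) (fun j hj => if_neg (by omega))]
    calc (∑' k, if m ≤ k + m then a (k + m - m) else 0) = ∑' k, a k := by
          refine tsum_congr fun k => ?_
          rw [if_pos (Nat.le_add_left m k)]; congr 1; omega
      _ = 1 := ha_sum.tsum_eq
  -- summability of the majorant F
  have hF_nonneg : ∀ p : ℕ × ℕ, 0 ≤ Ffun S a q p := by
    intro p; unfold Ffun; split
    · exact mul_nonneg (hq_nonneg _) (aext_nonneg ha_nonneg _)
    · exact le_refl 0
  have hF_rw : ∀ i j : ℕ, S + 1 ≤ i →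
      Ffun S a q (i, j) = q i * (if i - S ≤ j then a (j - (i - S)) else 0) := by
    intro i j hi
    unfold Ffun
    rw [if_pos hi]
    simp only
    rw [arg_eq S i j hi, aext_eq]
  have hF_sm : Summable (Ffun S a q) := by
    rw [summable_prod_of_nonneg hF_nonneg]
    constructor
    · intro i
      by_cases hi : S + 1 ≤ i
      · have : (fun j => Ffun S a q (i, j)) =
            fun j => q i * (if i - S ≤ j then a (j - (i - S)) else 0) := by
          funext j; exact hF_rw i j hi
        rw [this]
        exact (hshift_sm (i - S)).mul_left (q i)
      · have : (fun j => Ffun S a q (i, j)) = fun _ => (0 : ℝ) := by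
          funext j; unfold Ffun; rw [if_neg hi]
        rw [this]; exact summable_zero
    · have hterm : ∀ i, (∑' j, Ffun S a q (i, j)) = if S + 1 ≤ i then q i else 0 := by
        intro i
        by_cases hi : S + 1 ≤ i
        · rw [if_pos hi, tsum_congr (fun j => hF_rw i j hi), tsum_mul_left,
            hshift_tsum (i - S), mul_one]
        · rw [if_neg hi]
          have : (fun j => Ffun S a q (i, j)) = fun _ => (0 : ℝ) := by
            funext j; unfold Ffun; rw [if_neg hi]
          rw [this]; exact tsum_zero
      rw [funext hterm]
      refine Summable.of_nonneg_of_le (fun i => ?_) (fun i => ?_) hq_sm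
      · split
        · exact hq_nonneg _
        · exact le_refl 0
      · split
        · exact le_refl _
        · exact hq_nonneg _
  -- summability of the double family g
  have hg_norm : ∀ i j : ℕ, ‖gfun S a q z i j‖ ≤ Ffun S a q (i, j) := by
    intro i j
    have hdef : gfun S a q z i j = ((Ffun S a q (i, j) : ℝ) : ℂ) * z ^ j := rfl
    rw [hdef, norm_mul, norm_pow, Complex.norm_real, Real.norm_of_nonneg (hF_nonneg _)]
    calc Ffun S a q (i, j) * ‖z‖ ^ j ≤ Ffun S a q (i, j) * 1 :=
          mul_le_mul_of_nonneg_left (pow_le_one₀ (norm_nonneg z) hz1) (hF_nonneg _)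
      _ = _ := mul_one _
  have hg_sm : Summable (Function.uncurry (gfun S a q z)) := by
    refine Summable.of_norm (Summable.of_nonneg_of_le (fun p => norm_nonneg _) ?_ hF_sm)
    rintro ⟨i, j⟩
    exact hg_norm i j
  -- the balance equation in ℂ
  have hbC : ∀ j : ℕ, (q j : ℂ) * z ^ j =
      (a j : ℂ) * (C : ℂ) * z ^ j + ∑' i, gfun S a q z i j := by
    intro j
    rw [h_balance j]
    unfold gfun
    push_cast [Complex.ofReal_tsum]
    rw [add_mul, ← tsum_mul_right]
  have haC_sm : Summable (fun j => (a j : ℂ) * (C : ℂ) * z ^ j) :=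
    ((hA_sm.mul_right (C : ℂ)).congr (fun j => by ring))
  have hT_sm : Summable (fun j => ∑' i, gfun S a q z i j) := by
    have h' : Summable (fun j => (q j : ℂ) * z ^ j - (a j : ℂ) * (C : ℂ) * z ^ j) :=
      hQ_sm.sub haC_sm
    refine h'.congr fun j => ?_
    rw [hbC j]; ring
  -- main identity before swapping
  have hmain : Qz = (C : ℂ) * A + ∑' j, ∑' i, gfun S a q z i j := by
    rw [hQ, tsum_congr hbC, Summable.tsum_add haC_sm hT_sm]
    congr 1
    calc (∑' j, (a j : ℂ) * (C : ℂ) * z ^ j)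
        = ∑' j, (C : ℂ) * ((a j : ℂ) * z ^ j) := tsum_congr (fun j => by ring)
      _ = (C : ℂ) * A := by rw [tsum_mul_left, ← hA]
  -- swap the double sum
  have hswap : (∑' j, ∑' i, gfun S a q z i j) = ∑' i, ∑' j, gfun S a q z i j :=
    Summable.tsum_comm hg_sm
  -- evaluate the inner sums
  have hinner : ∀ i, (∑' j, gfun S a q z i j) =
      if S + 1 ≤ i then (q i : ℂ) * z ^ (i - S) * A else 0 := by
    intro i
    by_cases hi : S + 1 ≤ i
    · rw [if_pos hi]
      have hrw : ∀ j, gfun S a q z i j =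
          ((q i : ℂ) * (((if i - S ≤ j then a (j - (i - S)) else 0 : ℝ)) : ℂ)) * z ^ j := by
        intro j
        unfold gfun
        rw [if_pos hi, arg_eq S i j hi, aext_eq]
        push_cast
        ring
      have hsm_i : Summable (fun j => gfun S a q z i j) := hg_sm.prod_factor i
      rw [tsum_congr hrw, tsum_shift_aux (i - S)
        (hsm_i.congr hrw)
        (fun j hj => by rw [if_neg (by omega)]; push_cast; ring)]
      calc (∑' k, ((q i : ℂ) *
              (((if i - S ≤ k + (i - S) then a (k + (i - S) - (i - S)) else 0 : ℝ)) : ℂ)) *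
              z ^ (k + (i - S)))
          = ∑' k, ((q i : ℂ) * z ^ (i - S)) * ((a k : ℂ) * z ^ k) := by
            refine tsum_congr fun k => ?_
            rw [if_pos (Nat.le_add_left _ k), pow_add]
            have : k + (i - S) - (i - S) = k := by omega
            rw [this]; ring
        _ = (q i : ℂ) * z ^ (i - S) * A := by rw [tsum_mul_left, ← hA, mul_assoc]
    · rw [if_neg hi]
      have : (fun j => gfun S a q z i j) = fun _ => (0 : ℂ) := by
        funext j; unfold gfun; rw [if_neg hi]; push_cast; ring
      rw [this]; exact tsum_zero
  -- total value of double sum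
  set W : ℂ := ∑' i, if S + 1 ≤ i then (q i : ℂ) * z ^ (i - S) else 0 with hW
  have htotal : (∑' j, ∑' i, gfun S a q z i j) = W * A := by
    rw [hswap, tsum_congr hinner, hW, ← tsum_mul_right]
    refine tsum_congr fun i => ?_
    split
    · rfl
    · rw [zero_mul]
  -- summability of the W-family
  have hW_sm : Summable (fun i => if S + 1 ≤ i then (q i : ℂ) * z ^ (i - S) else 0) := by
    refine Summable.of_norm (Summable.of_nonneg_of_le (fun i => norm_nonneg _) (fun i => ?_) hq_sm)
    split
    · rw [norm_mul, norm_pow, Complex.norm_real, Real.norm_of_nonneg (hq_nonneg i)]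
      calc q i * ‖z‖ ^ (i - S) ≤ q i * 1 :=
            mul_le_mul_of_nonneg_left (pow_le_one₀ (norm_nonneg z) hz1) (hq_nonneg i)
        _ = q i := mul_one _
    · rw [norm_zero]; exact hq_nonneg i
  set P : ℂ := ∑ i ∈ Finset.range (S + 1), (q i : ℂ) * z ^ i with hP
  -- z^S * W = Qz - P
  have hzW : z ^ S * W = Qz - P := by
    have h1 : z ^ S * W = ∑' i, if S + 1 ≤ i then (q i : ℂ) * z ^ i else 0 := by
      rw [hW, ← tsum_mul_left]
      refine tsum_congr fun i => ?_
      by_cases hi : S + 1 ≤ i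
      · rw [if_pos hi, if_pos hi, ← mul_assoc, mul_comm (z ^ S) ((q i : ℂ)), mul_assoc,
          ← pow_add]
        congr 2
        omega
      · rw [if_neg hi, if_neg hi, mul_zero]
    have hf_sm : Summable (fun i => if S + 1 ≤ i then (q i : ℂ) * z ^ i else 0) := by
      refine Summable.of_norm (Summable.of_nonneg_of_le (fun i => norm_nonneg _)
        (fun i => ?_) hq_sm)
      split
      · rw [norm_mul, norm_pow, Complex.norm_real, Real.norm_of_nonneg (hq_nonneg i)]
        calc q i * ‖z‖ ^ i ≤ q i * 1 :=
              mul_le_mul_of_nonneg_left (pow_le_one₀ (norm_nonneg z) hz1) (hq_nonneg i)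
          _ = q i := mul_one _
      · rw [norm_zero]; exact hq_nonneg i
    rw [h1, tsum_shift_aux (S + 1) hf_sm (fun j hj => if_neg (by omega))]
    have h2 : (∑' k, if S + 1 ≤ k + (S + 1) then (q (k + (S + 1)) : ℂ) * z ^ (k + (S + 1)) else 0)
        = ∑' k, (q (k + (S + 1)) : ℂ) * z ^ (k + (S + 1)) :=
      tsum_congr fun k => if_pos (Nat.le_add_left _ k)
    rw [h2, eq_sub_iff_add_eq, add_comm, hP, hQ]
    exact Summable.sum_add_tsum_nat_add (S + 1) hQ_sm
  -- the numerator identity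
  have hNP : (z - 1) * (∑ i ∈ Finset.range S, (q i : ℂ) * ∑ l ∈ Finset.Ico i S, z ^ l)
      = z ^ S * (C : ℂ) - P := by
    have hC' : (C : ℂ) = ∑ i ∈ Finset.range (S + 1), (q i : ℂ) := by
      rw [hC]; push_cast; rfl
    rw [hC', hP, Finset.mul_sum, Finset.mul_sum, ← Finset.sum_sub_distrib,
      Finset.sum_range_succ]
    have hlast : z ^ S * (q S : ℂ) - (q S : ℂ) * z ^ S = 0 := by ring
    rw [hlast, add_zero]
    refine Finset.sum_congr rfl fun i hi => ?_
    have hiS : i ≤ S := (Finset.mem_range.1 hi).le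
    have hgeom : (∑ l ∈ Finset.Ico i S, z ^ l) * (z - 1) = z ^ S - z ^ i :=
      geom_sum_Ico_mul z hiS
    calc (z - 1) * ((q i : ℂ) * ∑ l ∈ Finset.Ico i S, z ^ l)
        = (q i : ℂ) * ((∑ l ∈ Finset.Ico i S, z ^ l) * (z - 1)) := by ring
      _ = (q i : ℂ) * (z ^ S - z ^ i) := by rw [hgeom]
      _ = z ^ S * (q i : ℂ) - (q i : ℂ) * z ^ i := by ring
  -- assemble everything
  have hQmain : Qz = (C : ℂ) * A + W * A := by rw [hmain, htotal]
  have e2 : z ^ S * Qz = z ^ S * (C : ℂ) * A + (Qz - P) * A := by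
    calc z ^ S * Qz = z ^ S * (C : ℂ) * A + (z ^ S * W) * A := by rw [hQmain]; ring
      _ = z ^ S * (C : ℂ) * A + (Qz - P) * A := by rw [hzW]
  calc (z ^ S - A) * Qz = z ^ S * Qz - A * Qz := by ring
    _ = (z ^ S * (C : ℂ) * A + (Qz - P) * A) - A * Qz := by rw [e2]
    _ = (z ^ S * (C : ℂ) - P) * A := by ring
    _ = ((z - 1) * (∑ i ∈ Finset.range S, (q i : ℂ) * ∑ l ∈ Finset.Ico i S, z ^ l)) * A := by
        rw [hNP]
    _ = _ := by ring
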